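/- (Theorem 1, mean-field equilibrium property) If the family θ satisfies the fixed-point property, then the strategy induced by θ is optimal against itself: for every Markov policy σ, every t ∈ {1,…,T}, z ∈ PMF X and x ∈ X, J_t^{θ}(z,x) ≥ J_t^{σ}(z,x), where in both returns the mean-field flow is the equilibrium flow generated by θ. -/

import Mathlib

open scoped BigOperators ENNReal

section MFG

variable {X A : Type*} [Fintype X] [Fintype A] [Nonempty X] [Nonempty A]

/-- McKean–Vlasov update: `phi τ z γ (y) = ∑ x, ∑ a, z x * γ x a * τ x a z y`. -/
noncomputable def phi (τ : X → A → PMF X → PMF X) (z : PMF X) (γ : X → PMF A) : PMF X :=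
  z.bind fun x => (γ x).bind fun a => τ x a z

/-- Backward-recursive value function with `V (T+1) = 0`. -/
noncomputable def V (τ : X → A → PMF X → PMF X) (R : X → A → PMF X → ℝ) (δ : ℝ)
    (T : ℕ) (θ : ℕ → PMF X → X → PMF A) (t : ℕ) (z : PMF X) (x : X) : ℝ :=
  if h : T < t then 0
  else
    ∑ a : A, ((θ t z x) a).toReal *
      (R x a z + δ * ∑ x' : X, ((τ x a z) x').toReal *
        V τ R δ T θ (t + 1) (phi τ z (θ t z)) x')
termination_by T + 1 - t
decreasing_by omega

/-- Action-value function `Q_t(z,x,a,γ)`. -/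
noncomputable def Q (τ : X → A → PMF X → PMF X) (R : X → A → PMF X → ℝ) (δ : ℝ)
    (T : ℕ) (θ : ℕ → PMF X → X → PMF A) (t : ℕ) (z : PMF X) (x : X) (a : A)
    (γ : X → PMF A) : ℝ :=
  R x a z + δ * ∑ x' : X, ((τ x a z) x').toReal * V τ R δ T θ (t + 1) (phi τ z γ) x'

/-- The fixed-point property of the equilibrium generating family `θ`. -/
def IsFixedPoint (τ : X → A → PMF X → PMF X) (R : X → A → PMF X → ℝ) (δ : ℝ)
    (T : ℕ) (θ : ℕ → PMF X → X → PMF A) : Prop :=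
  ∀ t, 1 ≤ t → t ≤ T → ∀ (z : PMF X) (x : X) (π : PMF A),
    ∑ a : A, ((θ t z x) a).toReal * Q τ R δ T θ t z x a (θ t z) ≥
      ∑ a : A, (π a).toReal * Q τ R δ T θ t z x a (θ t z)

/-- Mean-field flow generated by the policy `θ`, started from `z` at time `t`:
`flow τ θ t z n = z_{t+n}`. -/
noncomputable def flow (τ : X → A → PMF X → PMF X) (θ : ℕ → PMF X → X → PMF A)
    (t : ℕ) (z : PMF X) : ℕ → PMF X
  | 0 => z
  | n + 1 => phi τ (flow τ θ t z n) (θ (t + n) (flow τ θ t z n))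

/-- Individual state trajectory: `traj x xs 0 = x`, `traj x xs (i+1) = xs i`. -/
def traj {n : ℕ} (x : X) (xs : Fin n → X) : Fin (n + 1) → X := Fin.cases x xs

/-- Path-sum expected discounted return `J_t^σ(z,x)` of the Markov policy `σ`,
against the mean-field flow generated by `θ` started from `z` at time `t`. -/
noncomputable def J (τ : X → A → PMF X → PMF X) (R : X → A → PMF X → ℝ) (δ : ℝ)
    (T : ℕ) (θ σ : ℕ → PMF X → X → PMF A) (t : ℕ) (z : PMF X) (x : X) : ℝ :=
  ∑ as : Fin (T - t + 1) → A, ∑ xs : Fin (T - t) → X,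
    ((∏ k : Fin (T - t + 1),
        ((σ (t + (k : ℕ)) (flow τ θ t z (k : ℕ)) (traj x xs k)) (as k)).toReal) *
      (∏ k : Fin (T - t),
        ((τ (traj x xs k.castSucc) (as k.castSucc) (flow τ θ t z (k : ℕ)))
          (traj x xs k.succ)).toReal)) *
    (∑ k : Fin (T - t + 1),
      δ ^ (k : ℕ) * R (traj x xs k) (as k) (flow τ θ t z (k : ℕ)))

/-! ### Auxiliary lemmas -/

lemma pmfSumToReal {α : Type*} [Fintype α] (p : PMF α) : ∑ a : α, (p a).toReal = 1 := by
  rw [← ENNReal.toReal_sum (fun a _ => p.apply_ne_top a),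
    ← tsum_eq_sum (L := SummationFilter.unconditional α) (fun a ha => absurd (Finset.mem_univ a) ha)]
  simp only [p.tsum_coe, ENNReal.toReal_one]

lemma sumPiSucc {α : Type*} [Fintype α] (n : ℕ) (f : (Fin (n+1) → α) → ℝ) :
    ∑ g : Fin (n+1) → α, f g = ∑ a : α, ∑ g : Fin n → α, f (Fin.cons a g) := by
  rw [← (Fin.consEquiv (fun _ => α)).sum_comp f, Fintype.sum_prod_type]; rfl

omit [Fintype X] [Fintype A] [Nonempty X] [Nonempty A] in
lemma traj_def {n : ℕ} (x : X) (xs : Fin n → X) : traj x xs = Fin.cons x xs := rfl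

variable (τ : X → A → PMF X → PMF X) (R : X → A → PMF X → ℝ) (δ : ℝ)
  (θ : ℕ → PMF X → X → PMF A)

omit [Fintype X] [Fintype A] [Nonempty X] [Nonempty A] in
lemma flow_zero (t : ℕ) (z : PMF X) : flow τ θ t z 0 = z := rfl

omit [Fintype X] [Fintype A] [Nonempty X] [Nonempty A] in
lemma flow_shift (t : ℕ) (z : PMF X) (k : ℕ) :
    flow τ θ (t+1) (phi τ z (θ t z)) k = flow τ θ t z (k+1) := by
  induction k with
  | zero => rfl
  | succ k ih =>
    have h : t + 1 + k = t + (k+1) := by omega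
    simp only [flow, ih, h]

/-- Probability weight of a trajectory. -/
noncomputable def pathP (σ : ℕ → PMF X → X → PMF A) (t n : ℕ) (z : PMF X) (x : X)
    (as : Fin (n+1) → A) (xs : Fin n → X) : ℝ :=
  (∏ k : Fin (n + 1),
      ((σ (t + (k : ℕ)) (flow τ θ t z (k : ℕ)) (traj x xs k)) (as k)).toReal) *
  (∏ k : Fin n,
      ((τ (traj x xs k.castSucc) (as k.castSucc) (flow τ θ t z (k : ℕ)))
        (traj x xs k.succ)).toReal)

/-- Discounted reward of a trajectory. -/
noncomputable def pathG (t n : ℕ) (z : PMF X) (x : X)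
    (as : Fin (n+1) → A) (xs : Fin n → X) : ℝ :=
  ∑ k : Fin (n + 1), δ ^ (k : ℕ) * R (traj x xs k) (as k) (flow τ θ t z (k : ℕ))

/-- Path-sum with explicit horizon length. -/
noncomputable def Jaux (σ : ℕ → PMF X → X → PMF A) (t n : ℕ) (z : PMF X) (x : X) : ℝ :=
  ∑ as : Fin (n + 1) → A, ∑ xs : Fin n → X,
    pathP τ θ σ t n z x as xs * pathG τ R δ θ t n z x as xs

lemma J_eq_Jaux (T : ℕ) (σ : ℕ → PMF X → X → PMF A) (t : ℕ) (z : PMF X) (x : X) :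
    J τ R δ T θ σ t z x = Jaux τ R δ θ σ t (T - t) z x := rfl

omit [Fintype X] [Fintype A] [Nonempty X] [Nonempty A] in
lemma step_decomp (ς : ℕ → PMF X → X → PMF A) (t n : ℕ) (z : PMF X) (x : X)
    (a : A) (as : Fin (n+1) → A) (y : X) (xs : Fin n → X) :
    pathP τ θ ς t (n+1) z x (Fin.cons a as) (Fin.cons y xs)
    = ((ς t z x a).toReal * ((τ x a z) y).toReal) *
        pathP τ θ ς (t+1) n (phi τ z (θ t z)) y as xs := by
  simp only [pathP]
  rw [Fin.prod_univ_succ (fun k : Fin (n+1+1) =>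
        ((ς (t + (k : ℕ)) (flow τ θ t z (k : ℕ)) (traj x (Fin.cons y xs) k)) ((Fin.cons a as : Fin (n+1+1) → A) k)).toReal),
      Fin.prod_univ_succ (fun k : Fin (n+1) =>
        ((τ (traj x (Fin.cons y xs) k.castSucc) ((Fin.cons a as : Fin (n+1+1) → A) k.castSucc) (flow τ θ t z (k : ℕ)))
          (traj x (Fin.cons y xs) k.succ)).toReal)]
  have h1 : (∏ k : Fin (n+1),
      ((ς (t + ((k.succ : Fin (n+2)) : ℕ)) (flow τ θ t z ((k.succ : Fin (n+2)) : ℕ))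
        (traj x (Fin.cons y xs) k.succ)) ((Fin.cons a as : Fin (n+1+1) → A) k.succ)).toReal)
      = ∏ k : Fin (n+1),
        ((ς (t+1 + (k : ℕ)) (flow τ θ (t+1) (phi τ z (θ t z)) (k : ℕ)) (traj y xs k)) (as k)).toReal := by
    apply Finset.prod_congr rfl; intro k _
    have h : t + ((k : ℕ) + 1) = t + 1 + (k : ℕ) := by omega
    simp only [traj_def, Fin.cons_succ, Fin.val_succ, flow_shift, h]
  have h2 : (∏ k : Fin n,
      ((τ (traj x (Fin.cons y xs) (k.succ).castSucc) ((Fin.cons a as : Fin (n+1+1) → A) (k.succ).castSucc)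
        (flow τ θ t z ((k.succ : Fin (n+1)) : ℕ))) (traj x (Fin.cons y xs) (k.succ).succ)).toReal)
      = ∏ k : Fin n,
        ((τ (traj y xs k.castSucc) (as k.castSucc) (flow τ θ (t+1) (phi τ z (θ t z)) (k : ℕ)))
          (traj y xs k.succ)).toReal := by
    apply Finset.prod_congr rfl; intro k _
    simp only [traj_def, ← Fin.succ_castSucc, Fin.cons_succ, Fin.val_succ, flow_shift]
  rw [h1, h2]
  simp only [traj_def, Fin.cons_zero, Fin.cons_succ, Fin.castSucc_zero, Fin.val_zero,
    Nat.add_zero, flow_zero]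
  ring

omit [Fintype X] [Fintype A] [Nonempty X] [Nonempty A] in
lemma reward_decomp (t n : ℕ) (z : PMF X) (x : X)
    (a : A) (as : Fin (n+1) → A) (y : X) (xs : Fin n → X) :
    pathG τ R δ θ t (n+1) z x (Fin.cons a as) (Fin.cons y xs)
    = R x a z + δ * pathG τ R δ θ (t+1) n (phi τ z (θ t z)) y as xs := by
  simp only [pathG]
  rw [Fin.sum_univ_succ]
  simp only [traj_def, Fin.cons_zero, Fin.cons_succ, Fin.val_succ, Fin.val_zero, pow_zero,
    one_mul, flow_shift, Finset.mul_sum, flow_zero]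
  congr 1
  apply Finset.sum_congr rfl; intro k _
  rw [pow_succ']
  ring

lemma Jaux_zero (σ : ℕ → PMF X → X → PMF A) (t : ℕ) (z : PMF X) (x : X) :
    Jaux τ R δ θ σ t 0 z x = ∑ a : A, ((σ t z x a)).toReal * R x a z := by
  simp only [Jaux]
  rw [sumPiSucc]
  apply Finset.sum_congr rfl; intro a _
  simp [pathP, pathG, traj_def, flow_zero]

lemma prob_sum_one (σ : ℕ → PMF X → X → PMF A) (n : ℕ) : ∀ (t : ℕ) (z : PMF X) (x : X),
    (∑ as : Fin (n + 1) → A, ∑ xs : Fin n → X, pathP τ θ σ t n z x as xs) = 1 := by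
  induction n with
  | zero =>
    intro t z x
    rw [sumPiSucc]
    have h : ∀ a : A, (∑ g : Fin 0 → A, ∑ xs : Fin 0 → X,
        pathP τ θ σ t 0 z x (Fin.cons a g) xs) = (σ t z x a).toReal := by
      intro a
      simp [pathP, traj_def, flow_zero]
    rw [Finset.sum_congr rfl (fun a _ => h a)]
    exact pmfSumToReal _
  | succ n ih =>
    intro t z x
    rw [sumPiSucc]
    have h : ∀ a : A, (∑ as : Fin (n+1) → A, ∑ xs : Fin (n+1) → X,
        pathP τ θ σ t (n+1) z x (Fin.cons a as) xs) = (σ t z x a).toReal := by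
      intro a
      have e1 : ∀ as : Fin (n+1) → A,
          (∑ xs : Fin (n+1) → X, pathP τ θ σ t (n+1) z x (Fin.cons a as) xs)
          = ∑ y : X, ((σ t z x a).toReal * ((τ x a z) y).toReal) *
              ∑ xs : Fin n → X, pathP τ θ σ (t+1) n (phi τ z (θ t z)) y as xs := by
        intro as
        rw [sumPiSucc]
        apply Finset.sum_congr rfl; intro y _
        rw [Finset.mul_sum]
        apply Finset.sum_congr rfl; intro xs _
        exact step_decomp τ θ σ t n z x a as y xs
      rw [Finset.sum_congr rfl (fun as _ => e1 as), Finset.sum_comm]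
      have e2 : ∀ y : X, (∑ as : Fin (n+1) → A,
          ((σ t z x a).toReal * ((τ x a z) y).toReal) *
            ∑ xs : Fin n → X, pathP τ θ σ (t+1) n (phi τ z (θ t z)) y as xs)
          = ((σ t z x a).toReal * ((τ x a z) y).toReal) := by
        intro y
        rw [← Finset.mul_sum, ih (t+1) (phi τ z (θ t z)) y, mul_one]
      rw [Finset.sum_congr rfl (fun y _ => e2 y), ← Finset.mul_sum, pmfSumToReal, mul_one]
    rw [Finset.sum_congr rfl (fun a _ => h a)]
    exact pmfSumToReal _

lemma Jaux_succ (σ : ℕ → PMF X → X → PMF A) (t n : ℕ) (z : PMF X) (x : X) :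
    Jaux τ R δ θ σ t (n+1) z x = ∑ a : A, ((σ t z x a)).toReal *
      (R x a z + δ * ∑ x' : X, ((τ x a z) x').toReal *
        Jaux τ R δ θ σ (t+1) n (phi τ z (θ t z)) x') := by
  rw [Jaux, sumPiSucc]
  apply Finset.sum_congr rfl; intro a _
  have e1 : ∀ as : Fin (n+1) → A,
      (∑ xs : Fin (n+1) → X, pathP τ θ σ t (n+1) z x (Fin.cons a as) xs *
          pathG τ R δ θ t (n+1) z x (Fin.cons a as) xs)
      = ∑ y : X, ∑ xs : Fin n → X,
          (((σ t z x a).toReal * ((τ x a z) y).toReal) *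
              pathP τ θ σ (t+1) n (phi τ z (θ t z)) y as xs) *
            (R x a z + δ * pathG τ R δ θ (t+1) n (phi τ z (θ t z)) y as xs) := by
    intro as
    rw [sumPiSucc]
    apply Finset.sum_congr rfl; intro y _
    apply Finset.sum_congr rfl; intro xs _
    rw [step_decomp τ θ σ t n z x a as y xs, reward_decomp τ R δ θ t n z x a as y xs]
  rw [Finset.sum_congr rfl (fun as _ => e1 as), Finset.sum_comm]
  have e2 : ∀ y : X, (∑ as : Fin (n+1) → A, ∑ xs : Fin n → X,
      (((σ t z x a).toReal * ((τ x a z) y).toReal) *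
          pathP τ θ σ (t+1) n (phi τ z (θ t z)) y as xs) *
        (R x a z + δ * pathG τ R δ θ (t+1) n (phi τ z (θ t z)) y as xs))
      = ((σ t z x a).toReal * ((τ x a z) y).toReal) * R x a z
        + (((σ t z x a).toReal * ((τ x a z) y).toReal) * δ) *
            Jaux τ R δ θ σ (t+1) n (phi τ z (θ t z)) y := by
    intro y
    have alg : ∀ p g : ℝ,
        (((σ t z x a).toReal * ((τ x a z) y).toReal) * p) * (R x a z + δ * g)
        = ((σ t z x a).toReal * ((τ x a z) y).toReal) * (p * R x a z)
          + (((σ t z x a).toReal * ((τ x a z) y).toReal) * δ) * (p * g) := by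
      intro p g; ring
    rw [Finset.sum_congr rfl (fun as _ => Finset.sum_congr rfl (fun xs _ => alg _ _))]
    simp only [Finset.sum_add_distrib, ← Finset.mul_sum]
    rw [← Jaux]
    simp only [← Finset.sum_mul]
    rw [prob_sum_one τ θ σ n (t+1) (phi τ z (θ t z)) y, one_mul]
  rw [Finset.sum_congr rfl (fun y _ => e2 y), Finset.sum_add_distrib]
  have hA : (∑ y : X, ((σ t z x a).toReal * ((τ x a z) y).toReal) * R x a z)
      = (σ t z x a).toReal * R x a z := by
    have : ∀ y ∈ Finset.univ, ((σ t z x a).toReal * ((τ x a z) y).toReal) * R x a z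
        = ((σ t z x a).toReal * R x a z) * ((τ x a z) y).toReal := by intro y _; ring
    rw [Finset.sum_congr rfl this, ← Finset.mul_sum, pmfSumToReal, mul_one]
  have hB : (∑ y : X, (((σ t z x a).toReal * ((τ x a z) y).toReal) * δ) *
        Jaux τ R δ θ σ (t+1) n (phi τ z (θ t z)) y)
      = ((σ t z x a).toReal * δ) * ∑ y : X, ((τ x a z) y).toReal *
        Jaux τ R δ θ σ (t+1) n (phi τ z (θ t z)) y := by
    rw [Finset.mul_sum]
    apply Finset.sum_congr rfl; intro y _; ring
  rw [hA, hB]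
  ring



section Vlemmas
variable (T : ℕ)

lemma V_unfold {t : ℕ} (h : ¬ T < t) (z : PMF X) (x : X) :
    V τ R δ T θ t z x = ∑ a : A, ((θ t z x) a).toReal *
      (R x a z + δ * ∑ x' : X, ((τ x a z) x').toReal *
        V τ R δ T θ (t + 1) (phi τ z (θ t z)) x') := by
  rw [V, dif_neg h]

lemma V_past {t : ℕ} (h : T < t) (z : PMF X) (x : X) : V τ R δ T θ t z x = 0 := by
  rw [V, dif_pos h]

lemma Q_top (z : PMF X) (x : X) (a : A) (γ : X → PMF A) :
    Q τ R δ T θ T z x a γ = R x a z := by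
  simp only [Q]
  have : ∀ x' : X, V τ R δ T θ (T + 1) (phi τ z γ) x' = 0 :=
    fun x' => V_past τ R δ θ T (Nat.lt_succ_self T) _ x'
  simp [this]

lemma Jaux_eq_V : ∀ n t, t + n = T → ∀ (z : PMF X) (x : X),
    Jaux τ R δ θ θ t n z x = V τ R δ T θ t z x := by
  intro n
  induction n with
  | zero =>
    intro t h z x
    have ht : t = T := by omega
    subst ht
    rw [Jaux_zero, V_unfold τ R δ θ t (lt_irrefl t)]
    apply Finset.sum_congr rfl; intro a _
    have : ∀ x' : X, V τ R δ t θ (t + 1) (phi τ z (θ t z)) x' = 0 :=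
      fun x' => V_past τ R δ θ t (Nat.lt_succ_self t) _ x'
    simp [this]
  | succ n ih =>
    intro t h z x
    rw [Jaux_succ, V_unfold τ R δ θ T (by omega : ¬ T < t)]
    apply Finset.sum_congr rfl; intro a _
    have hx : (∑ x' : X, ((τ x a z) x').toReal *
          Jaux τ R δ θ θ (t+1) n (phi τ z (θ t z)) x')
        = ∑ x' : X, ((τ x a z) x').toReal * V τ R δ T θ (t+1) (phi τ z (θ t z)) x' :=
      Finset.sum_congr rfl (fun x' _ => by rw [ih (t+1) (by omega) (phi τ z (θ t z)) x'])
    rw [hx]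

lemma Jaux_le_V (hδ : 0 ≤ δ) (hθ : IsFixedPoint τ R δ T θ) (σ : ℕ → PMF X → X → PMF A) :
    ∀ n t, 1 ≤ t → t + n = T → ∀ (z : PMF X) (x : X),
    Jaux τ R δ θ σ t n z x ≤ V τ R δ T θ t z x := by
  intro n
  induction n with
  | zero =>
    intro t ht1 h z x
    have ht : t = T := by omega
    rw [Jaux_zero]
    have hQ : ∀ a : A, Q τ R δ T θ t z x a (θ t z) = R x a z := by
      intro a; rw [ht]; exact Q_top τ R δ θ T z x a (θ T z)
    calc ∑ a : A, ((σ t z x a)).toReal * R x a z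
        = ∑ a : A, ((σ t z x) a).toReal * Q τ R δ T θ t z x a (θ t z) := by
          apply Finset.sum_congr rfl; intro a _; rw [hQ]
      _ ≤ ∑ a : A, ((θ t z x) a).toReal * Q τ R δ T θ t z x a (θ t z) :=
          hθ t ht1 ht.le z x (σ t z x)
      _ = V τ R δ T θ t z x := by
          rw [V_unfold τ R δ θ T (by omega : ¬ T < t)]
          simp only [Q]
  | succ n ih =>
    intro t ht1 h z x
    rw [Jaux_succ]
    calc ∑ a : A, ((σ t z x a)).toReal *
          (R x a z + δ * ∑ x' : X, ((τ x a z) x').toReal *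
            Jaux τ R δ θ σ (t+1) n (phi τ z (θ t z)) x')
        ≤ ∑ a : A, ((σ t z x a)).toReal *
          (R x a z + δ * ∑ x' : X, ((τ x a z) x').toReal *
            V τ R δ T θ (t+1) (phi τ z (θ t z)) x') := by
          apply Finset.sum_le_sum; intro a _
          apply mul_le_mul_of_nonneg_left _ ENNReal.toReal_nonneg
          apply add_le_add_right
          apply mul_le_mul_of_nonneg_left _ hδ
          apply Finset.sum_le_sum; intro x' _
          exact mul_le_mul_of_nonneg_left
            (ih (t+1) (by omega) (by omega) (phi τ z (θ t z)) x') ENNReal.toReal_nonneg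
      _ = ∑ a : A, ((σ t z x) a).toReal * Q τ R δ T θ t z x a (θ t z) := rfl
      _ ≤ ∑ a : A, ((θ t z x) a).toReal * Q τ R δ T θ t z x a (θ t z) :=
          hθ t ht1 (by omega) z x (σ t z x)
      _ = V τ R δ T θ t z x := by
          rw [V_unfold τ R δ θ T (by omega : ¬ T < t)]
          simp only [Q]

end Vlemmas

/-- Theorem 1: the strategy induced by `θ` is optimal against itself:
`J_t^θ(z,x) ≥ J_t^σ(z,x)` for every Markov policy `σ`, against the equilibrium flow. -/
theorem theta_optimal_against_itself
    (τ : X → A → PMF X → PMF X) (R : X → A → PMF X → ℝ) (δ : ℝ)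
    (hδ0 : 0 < δ) (hδ1 : δ ≤ 1) (T : ℕ) (hT : 1 ≤ T)
    (θ : ℕ → PMF X → X → PMF A) (hθ : IsFixedPoint τ R δ T θ)
    (σ : ℕ → PMF X → X → PMF A)
    (t : ℕ) (ht1 : 1 ≤ t) (htT : t ≤ T) (z : PMF X) (x : X) :
    J τ R δ T θ θ t z x ≥ J τ R δ T θ σ t z x := by
  rw [J_eq_Jaux, J_eq_Jaux]
  have h : t + (T - t) = T := by omega
  calc Jaux τ R δ θ σ t (T - t) z x
      ≤ V τ R δ T θ t z x := Jaux_le_V τ R δ θ T hδ0.le hθ σ (T - t) t ht1 h z x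
    _ = Jaux τ R δ θ θ t (T - t) z x := (Jaux_eq_V τ R δ θ T (T - t) t h z x).symm



end MFG
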